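/- For every p with |p| ≤ 1/2, the binary entropy function satisfies the convergent series expansion h(1/2 - p) = 1 - Σ_{k=1}^∞ (log₂e)/(2k(2k-1)) · (2p)^{2k}. -/

import Mathlib

open Real Filter MeasureTheory

/-- Binary entropy function (base-2 logarithm), with `binEnt 0 = binEnt 1 = 0`. -/
noncomputable def binEnt (p : ℝ) : ℝ :=
  -p * Real.logb 2 p - (1 - p) * Real.logb 2 (1 - p)

/-- Inverse of the binary entropy function, mapping `[0,1]` onto `[0,1/2]`. -/
noncomputable def binEntInv (y : ℝ) : ℝ :=
  sInf {p : ℝ | p ∈ Set.Icc (0:ℝ) (1/2) ∧ y ≤ binEnt p}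

/-- Binary convolution `a*b := a(1-b) + b(1-a)`. -/
def bConv (a b : ℝ) : ℝ := a * (1 - b) + b * (1 - a)

/-- Shannon entropy (in bits) of a distribution on a finite type. -/
noncomputable def entropyDist {β : Type*} [Fintype β] (p : β → ℝ) : ℝ :=
  ∑ b, -(p b * Real.logb 2 (p b))

/-- Probability of the path `x` under the stationary symmetric binary Markov process with
transition probability `q`: the first coordinate is uniform (`Bernoulli(1/2)`) and each
subsequent coordinate flips the previous one with probability `q`. -/
noncomputable def symPathProb (q : ℝ) (n : ℕ) (x : Fin n → Bool) : ℝ :=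
  ∏ i : Fin n,
    if (i : ℕ) = 0 then (1/2 : ℝ)
    else if x ⟨(i : ℕ) - 1, Nat.lt_of_le_of_lt (Nat.sub_le _ _) i.isLt⟩ = x i then 1 - q else q

/-- Output distribution of a memoryless binary symmetric channel with crossover probability `a`
applied to an input with distribution `p` (each coordinate flipped independently w.p. `a`). -/
noncomputable def bscOutput {n : ℕ} (a : ℝ) (p : (Fin n → Bool) → ℝ) : (Fin n → Bool) → ℝ :=
  fun y => ∑ x : Fin n → Bool, p x * ∏ i, (if y i = x i then 1 - a else a)

/-- Distribution of the projection onto the coordinates in `s` of a vector with distribution `p`. -/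
noncomputable def projDist {n : ℕ} (p : (Fin n → Bool) → ℝ) (s : Finset (Fin n)) :
    ({ i // i ∈ s } → Bool) → ℝ :=
  fun y => ∑ x : Fin n → Bool, if (∀ i : { i // i ∈ s }, x i.val = y i) then p x else 0

/-- `H(X_S | S) = ∑_{s ⊆ [n]} P(S = s) H(X_s)`, where the random subset `S` contains each
element of `[n]` independently with probability `lam`. -/
noncomputable def condEntProj {n : ℕ} (lam : ℝ) (p : (Fin n → Bool) → ℝ) : ℝ :=
  ∑ s : Finset (Fin n), lam ^ s.card * (1 - lam) ^ (n - s.card) * entropyDist (projDist p s)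

/-- Transition kernel of a binary Markov chain: `P(b | a)` with off-diagonal entries
`q01 = P(1|0)` and `q10 = P(0|1)`. -/
def markovTrans (q01 q10 : ℝ) (a b : Bool) : ℝ :=
  if a then (if b then 1 - q10 else q10) else (if b then q01 else 1 - q01)

/-- Probability of the path `x` under the binary Markov chain with initial distribution
`(p0, p1)` and transition probabilities `q01, q10`. -/
noncomputable def markovPathProb (p0 p1 q01 q10 : ℝ) (n : ℕ) (x : Fin n → Bool) : ℝ :=
  ∏ i : Fin n,
    if (i : ℕ) = 0 then (if x i then p1 else p0)
    else markovTrans q01 q10 (x ⟨(i : ℕ) - 1, Nat.lt_of_le_of_lt (Nat.sub_le _ _) i.isLt⟩) (x i)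

open Topology in
private lemma aux_summable_bound : Summable (fun k : ℕ => 2 / ((2*(k:ℝ)+1)*(2*(k:ℝ)+2))) := by
  have h2 : Summable (fun n : ℕ => 1 / ((n:ℝ)) ^ 2) := summable_one_div_nat_pow.2 (by norm_num)
  have h3 : Summable (fun n : ℕ => 1 / ((n:ℝ)+1) ^ 2) := by
    have := (summable_nat_add_iff 1).2 h2
    simpa using this
  refine Summable.of_nonneg_of_le (fun k => by positivity) (fun k => ?_) (h3.mul_left 2)
  have hk : (0:ℝ) ≤ (k:ℝ) := Nat.cast_nonneg k
  rw [div_le_iff₀ (by positivity)]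
  have : ((k:ℝ)+1)^2 ≤ ((2*(k:ℝ)+1)*(2*(k:ℝ)+2)) := by nlinarith
  calc (2:ℝ) = (2 * (1 / ((k:ℝ)+1)^2)) * ((k:ℝ)+1)^2 := by field_simp
    _ ≤ (2 * (1 / ((k:ℝ)+1)^2)) * ((2*(k:ℝ)+1)*(2*(k:ℝ)+2)) := by
        apply mul_le_mul_of_nonneg_left this (by positivity)

open Topology in
private lemma core (x : ℝ) (hx : |x| < 1) :
    HasSum (fun k : ℕ => 2/((2*(k:ℝ)+1)*(2*(k:ℝ)+2)) * x^(2*k+2))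
      ((1-x)*Real.log (1-x) + (1+x)*Real.log (1+x)) := by
  have hx' : |(-x)| < 1 := by rwa [abs_neg]
  have hA := Real.hasSum_pow_div_log_of_abs_lt_one hx
  have hB := Real.hasSum_pow_div_log_of_abs_lt_one hx'
  rw [sub_neg_eq_add] at hB
  set c : ℕ → ℝ := fun n => -(1-x) * (x^(n+1)/((n:ℝ)+1)) + (-(1+x)) * ((-x)^(n+1)/((n:ℝ)+1))
    with hc
  have hC : HasSum c ((1-x)*Real.log (1-x) + (1+x)*Real.log (1+x)) := by
    have h := (hA.mul_left (-(1-x))).add (hB.mul_left (-(1+x)))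
    convert h using 1
    · rfl
    ring
  have hE : Summable (fun k => c (2*k)) :=
    hC.summable.comp_injective (mul_right_injective₀ two_ne_zero)
  have hO : Summable (fun k => c (2*k+1)) :=
    hC.summable.comp_injective (fun a b h => by omega)
  have h1 : HasSum c ((∑' k, c (2*k)) + (∑' k, c (2*k+1))) :=
    HasSum.even_add_odd hE.hasSum hO.hasSum
  have heq := h1.unique hC
  have h2 := hE.hasSum.add hO.hasSum
  rw [heq] at h2
  have hfun : (fun k : ℕ => 2/((2*(k:ℝ)+1)*(2*(k:ℝ)+2)) * x^(2*k+2))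
      = fun k => c (2*k) + c (2*k+1) := by
    funext k
    have o : (-x)^(2*k+1) = -(x^(2*k+1)) := Odd.neg_pow ⟨k, by ring⟩ x
    have e : (-x)^(2*k+1+1) = x^(2*k+1+1) := Even.neg_pow ⟨k+1, by ring⟩ x
    simp only [hc, o, e]
    push_cast
    have d1 : (2*(k:ℝ)+1) ≠ 0 := by positivity
    have d2 : (2*(k:ℝ)+2) ≠ 0 := by positivity
    have d3 : (2*(k:ℝ)+1+1) ≠ 0 := by positivity
    field_simp
    ring
  rw [hfun]
  exact h2

open Topology in
set_option maxHeartbeats 1000000 in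
private lemma core_one : HasSum (fun k : ℕ => 2/((2*(k:ℝ)+1)*(2*(k:ℝ)+2))) (2 * Real.log 2) := by
  rw [aux_summable_bound.hasSum_iff]
  set F : ℝ → ℝ := fun x => (1-x)*Real.log (1-x) + (1+x)*Real.log (1+x) with hF
  have hFc : Continuous F := by
    have h := continuous_mul_log
    exact ((h.comp (continuous_const.sub continuous_id)).add
      (h.comp (continuous_const.add continuous_id)))
  set u : ℕ → ℝ := fun n => 1 - 1/((n:ℝ)+2) with hu
  have hun : ∀ n, |u n| < 1 := by
    intro n
    have h1 : (0:ℝ) < 1/((n:ℝ)+2) := by positivity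
    have h2 : 1/((n:ℝ)+2) ≤ 1 := by
      rw [div_le_one (by positivity)]; linarith [Nat.cast_nonneg (α := ℝ) n]
    rw [hu]; dsimp only; rw [abs_lt]; constructor <;> linarith
  have hulim : Tendsto u atTop (𝓝 1) := by
    rw [hu]
    have : Tendsto (fun n : ℕ => ((n:ℝ)+2)) atTop atTop :=
      tendsto_natCast_atTop_atTop.atTop_add tendsto_const_nhds
    have h0 : Tendsto (fun n : ℕ => 1/((n:ℝ)+2)) atTop (𝓝 0) := by
      simpa only [one_div, Pi.inv_def] using this.inv_tendsto_atTop
    simpa using tendsto_const_nhds.sub h0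
  have htan : Tendsto (fun n => ∑' k : ℕ, (2/((2*(k:ℝ)+1)*(2*(k:ℝ)+2)) * (u n)^(2*k+2)))
      atTop (𝓝 (∑' k : ℕ, 2/((2*(k:ℝ)+1)*(2*(k:ℝ)+2)))) := by
    refine tendsto_tsum_of_dominated_convergence
      (f := fun (n : ℕ) (k : ℕ) => 2/((2*(k:ℝ)+1)*(2*(k:ℝ)+2)) * (u n)^(2*k+2))
      (g := fun k : ℕ => 2/((2*(k:ℝ)+1)*(2*(k:ℝ)+2)))
      aux_summable_bound ?_ ?_
    · intro k
      have : Tendsto (fun n => (u n)^(2*k+2)) atTop (𝓝 ((1:ℝ)^(2*k+2))) := hulim.pow _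
      simpa using tendsto_const_nhds.mul this
    · filter_upwards with n k
      have h1 : |u n| ≤ 1 := (hun n).le
      have h2 : |(u n)^(2*k+2)| ≤ 1 := by
        rw [abs_pow]; exact pow_le_one₀ (abs_nonneg _) h1
      rw [norm_eq_abs, abs_mul, abs_of_nonneg (by positivity : (0:ℝ) ≤ 2/((2*(k:ℝ)+1)*(2*(k:ℝ)+2)))]
      calc 2/((2*(k:ℝ)+1)*(2*(k:ℝ)+2)) * |(u n)^(2*k+2)|
          ≤ 2/((2*(k:ℝ)+1)*(2*(k:ℝ)+2)) * 1 := by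
            apply mul_le_mul_of_nonneg_left h2 (by positivity)
        _ = 2/((2*(k:ℝ)+1)*(2*(k:ℝ)+2)) := mul_one _
  have hFn : Tendsto (fun n => F (u n)) atTop (𝓝 (F 1)) :=
    (hFc.tendsto 1).comp hulim
  have hF1 : F 1 = 2 * Real.log 2 := by
    show (1-(1:ℝ))*Real.log (1-1) + (1+1)*Real.log (1+1) = 2 * Real.log 2
    norm_num
  have heq : ∀ n, ∑' k : ℕ, (2/((2*(k:ℝ)+1)*(2*(k:ℝ)+2)) * (u n)^(2*k+2)) = F (u n) :=
    fun n => (core (u n) (hun n)).tsum_eq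
  rw [funext heq] at htan
  rw [hF1] at hFn
  exact tendsto_nhds_unique htan hFn

open Topology in
private lemma coreB (x : ℝ) (hx : |x| ≤ 1) :
    HasSum (fun k : ℕ => 2/((2*(k:ℝ)+1)*(2*(k:ℝ)+2)) * x^(2*k+2))
      ((1-x)*Real.log (1-x) + (1+x)*Real.log (1+x)) := by
  rcases lt_or_eq_of_le hx with h | h
  · exact core x h
  · have : x = 1 ∨ x = -1 := by
      rcases abs_eq (by norm_num : (0:ℝ) ≤ 1) |>.mp h with h1 | h1
      · exact Or.inl h1
      · exact Or.inr h1
    rcases this with rfl | rfl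
    · have e : ((1:ℝ)-1)*Real.log (1-1) + (1+1)*Real.log (1+1) = 2 * Real.log 2 := by norm_num
      rw [e]
      simp only [one_pow, mul_one]
      exact core_one
    · have hpow : ∀ k : ℕ, ((-1:ℝ))^(2*k+2) = 1 := fun k => Even.neg_one_pow ⟨k+1, by ring⟩
      have e : ((1:ℝ)-(-1))*Real.log (1-(-1)) + (1+(-1))*Real.log (1+(-1)) = 2 * Real.log 2 := by
        norm_num
      rw [e]
      simp only [hpow, mul_one]
      exact core_one


/-- Taylor expansion of the binary entropy function: for `|p| ≤ 1/2`,
`h(1/2 - p) = 1 - Σ_{k≥1} (log₂e)/(2k(2k-1))·(2p)^{2k}`, a convergent series. -/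
theorem binEnt_taylor_expansion (p : ℝ) (hp : |p| ≤ 1/2) :
    Summable (fun k : ℕ =>
      Real.logb 2 (Real.exp 1) / (2*((k:ℝ)+1) * (2*((k:ℝ)+1) - 1)) * (2*p)^(2*(k+1))) ∧
    binEnt (1/2 - p) =
      1 - ∑' k : ℕ,
        Real.logb 2 (Real.exp 1) / (2*((k:ℝ)+1) * (2*((k:ℝ)+1) - 1)) * (2*p)^(2*(k+1)) := by
  have hlog2 : Real.log 2 ≠ 0 := (Real.log_pos (by norm_num)).ne'
  have hx1 : |2*p| ≤ 1 := by
    rw [abs_mul, abs_two]; linarith [hp]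
  have hS := coreB (2*p) hx1
  have hT : HasSum (fun k : ℕ =>
      Real.logb 2 (Real.exp 1) / (2*((k:ℝ)+1) * (2*((k:ℝ)+1) - 1)) * (2*p)^(2*(k+1)))
      (1/(2*Real.log 2) * ((1-2*p)*Real.log (1-2*p) + (1+2*p)*Real.log (1+2*p))) := by
    have h := hS.mul_left (1/(2*Real.log 2))
    have hfun : (fun k : ℕ => Real.logb 2 (Real.exp 1) /
          (2*((k:ℝ)+1) * (2*((k:ℝ)+1) - 1)) * (2*p)^(2*(k+1)))
        = fun k : ℕ => 1/(2*Real.log 2) * (2/((2*(k:ℝ)+1)*(2*(k:ℝ)+2)) * (2*p)^(2*k+2)) := by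
      funext k
      have he : 2*(k+1) = 2*k+2 := by ring
      rw [he]
      have hd1 : (2*(k:ℝ)+1) ≠ 0 := by positivity
      have hd2 : (2*(k:ℝ)+2) ≠ 0 := by positivity
      rw [Real.logb, Real.log_exp,
        show 2*((k:ℝ)+1) - 1 = 2*(k:ℝ)+1 from by ring,
        show 2*((k:ℝ)+1) = 2*(k:ℝ)+2 from by ring]
      field_simp
    rw [hfun]
    exact h
  refine ⟨hT.summable, ?_⟩
  rw [hT.tsum_eq]
  rcases eq_or_ne p (1/2) with rfl | hp1
  · norm_num [binEnt, Real.log_zero]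
    field_simp
    ring
  rcases eq_or_ne p (-(1/2)) with rfl | hp2
  · norm_num [binEnt, Real.log_zero]
    field_simp
    ring
  have hlt : |2*p| < 1 := by
    rcases lt_or_eq_of_le hx1 with h | h
    · exact h
    · exfalso
      rcases (abs_eq (by norm_num : (0:ℝ) ≤ 1)).mp h with h' | h'
      · exact hp1 (by linarith)
      · exact hp2 (by linarith)
  have h1 : 0 < 1 - 2*p := by have := (abs_lt.mp hlt).2; linarith
  have h2 : 0 < 1 + 2*p := by have := (abs_lt.mp hlt).1; linarith
  have e1 : (1/2 - p : ℝ) = (1-2*p)/2 := by ring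
  have e2 : (1 - (1-2*p)/2 : ℝ) = (1+2*p)/2 := by ring
  rw [binEnt, Real.logb, Real.logb, e1, e2,
    Real.log_div h1.ne' two_ne_zero, Real.log_div h2.ne' two_ne_zero]
  field_simp
  ring
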